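/- Every left identical e-semig is a left semigroup-joined-semigroup: if (S,·) and (S,⊙) are semigroups on the same set and e₀ ∈ S satisfies e₀⊙(x·y) = e₀⊙(x⊙y) = x⊙y for all x,y ∈ S, then for every e ∈ S the left e-join law holds, i.e. e⊙(x·y) = e⊙(x⊙y) for all x,y ∈ S (equivalently, since ⊙ is associative, e⊙(x·y) = (e⊙x)⊙y). -/
import Mathlib

/-- Every left identical `e₀`-semig is a left semigroup-joined-semigroup:
if `(S, mul)` and `(S, op)` are semigroups on the same set and `e₀` satisfies
`e₀ ⊙ (x·y) = e₀ ⊙ (x⊙y) = x⊙y` for all `x, y`, then the left `e`-join law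
`e ⊙ (x·y) = e ⊙ (x⊙y)` holds for every `e ∈ S`. -/
theorem stmt_17 {S : Type*} (mul op : S → S → S)
    (hmul : ∀ x y z : S, mul (mul x y) z = mul x (mul y z))
    (hop : ∀ x y z : S, op (op x y) z = op x (op y z))
    (e₀ : S)
    (h1 : ∀ x y : S, op e₀ (mul x y) = op e₀ (op x y))
    (h2 : ∀ x y : S, op e₀ (op x y) = op x y) :
    ∀ e x y : S, op e (mul x y) = op e (op x y) := by
  intro e x y
  calc op e (mul x y)
      = op e₀ (op e (mul x y)) := (h2 _ _).symm
    _ = op e₀ (mul e (mul x y)) := (h1 _ _).symm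
    _ = op e₀ (mul (mul e x) y) := by rw [hmul]
    _ = op e₀ (op (mul e x) y) := h1 _ _
    _ = op (op e₀ (mul e x)) y := (hop _ _ _).symm
    _ = op (op e₀ (op e x)) y := by rw [h1]
    _ = op (op e x) y := by rw [h2]
    _ = op e (op x y) := hop _ _ _
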